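/- Let E be a finite extension of ℚ_p with ring of integers O, and let f = Σ_{k≥0} a_k T^k ∈ O[[T]] be a nonzero formal power series. Then there exists N ∈ ℕ such that for every finite extension E' of E, with ring of integers O' and maximal ideal m', the set { x ∈ m' : Σ_{k≥0} a_k x^k = 0 } has at most N elements. (Here for x ∈ m' the series Σ a_k x^k converges in O' since ‖a_k x^k‖ → 0 and O' is complete; the finiteness is the consequence of the Weierstrass preparation theorem used to deduce non-vanishing of all but finitely many twisted L-values from non-vanishing of the p-adic measure.) -/

import Mathlib

open scoped NNReal

/-- The ring of integers (closed unit ball) of an ultrametric normed field. -/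
def integerSubring (E : Type*) [NormedField E] [IsUltrametricDist E] : Subring E where
  carrier := {x : E | ‖x‖ ≤ 1}
  one_mem' := by simp
  mul_mem' := by
    intro a b ha hb
    simp only [Set.mem_setOf_eq] at *
    calc ‖a * b‖ = ‖a‖ * ‖b‖ := norm_mul a b
    _ ≤ 1 := mul_le_one₀ ha (norm_nonneg b) hb
  zero_mem' := by simp
  add_mem' := by
    intro a b ha hb
    simp only [Set.mem_setOf_eq] at *
    exact le_trans (IsUltrametricDist.norm_add_le_max a b) (max_le ha hb)
  neg_mem' := by
    intro a ha
    simpa using ha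

set_option linter.unusedSectionVars false
set_option linter.unusedVariables false
set_option maxHeartbeats 1000000

section StrassmannAux

variable {K : Type*} [NormedField K] [IsUltrametricDist K] [CompleteSpace K]

lemma strass_summable {a : ℕ → K} {M : ℝ} (ha : ∀ k, ‖a k‖ ≤ M) {x : K} (hx : ‖x‖ < 1) :
    Summable fun k => a k * x ^ k := by
  apply Summable.of_norm_bounded
    ((summable_geometric_of_lt_one (norm_nonneg x) hx).mul_left M)
  intro k
  rw [norm_mul, norm_pow]
  exact mul_le_mul_of_nonneg_right (ha k) (pow_nonneg (norm_nonneg x) k)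

lemma strass_shift_summable {a : ℕ → K} {M : ℝ} (ha : ∀ k, ‖a k‖ ≤ M) {x : K} (hx : ‖x‖ < 1)
    (j : ℕ) : Summable fun m => a (j + 1 + m) * x ^ m :=
  strass_summable (fun m => ha (j + 1 + m)) hx

lemma strass_factor {a : ℕ → K} {M : ℝ} (ha : ∀ k, ‖a k‖ ≤ M) {x₀ : K} (hx₀ : ‖x₀‖ < 1)
    (hroot : ∑' k, a k * x₀ ^ k = 0) {x : K} (hx : ‖x‖ < 1) :
    ∑' k, a k * x ^ k = (∑' j, (∑' m, a (j + 1 + m) * x₀ ^ m) * x ^ j) * (x - x₀) := by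
  have hM0 : 0 ≤ M := le_trans (norm_nonneg (a 0)) (ha 0)
  set H : ℕ → ℕ → K := fun k i => if i < k then a k * (x ^ i * x₀ ^ (k - 1 - i)) else 0 with hH
  -- joint summability
  set r : ℝ := max ‖x‖ ‖x₀‖ with hrdef
  have hr0 : 0 ≤ r := le_trans (norm_nonneg x) (le_max_left _ _)
  have hr1 : r < 1 := max_lt hx hx₀
  set s : ℝ := (1 + r) / 2 with hsdef
  have hs0 : 0 < s := by positivity
  have hrs : r ≤ s := by rw [hsdef]; linarith
  have hs1 : s < 1 := by rw [hsdef]; linarith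
  have hDsum : Summable (fun p : ℕ × ℕ => if p.2 < p.1 then M * s ^ (p.1 - 1) else 0) := by
    rw [summable_prod_of_nonneg (by intro p; dsimp only; positivity)]
    constructor
    · intro k
      apply summable_of_ne_finset_zero (s := Finset.range k)
      intro i hi
      simp only [Finset.mem_range, not_lt] at hi
      simp [Nat.not_lt.mpr hi]
    · have h1 : Summable (fun k : ℕ => ((k : ℝ) + 1) * (M * s ^ k)) := by
        have hs1' : ‖s‖ < 1 := by rwa [Real.norm_eq_abs, abs_of_pos hs0]
        have h2 := (summable_pow_mul_geometric_of_norm_lt_one 1 hs1')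
        have h3 := summable_geometric_of_lt_one hs0.le hs1
        apply ((h2.add h3).mul_left M).congr
        intro n
        push_cast
        ring
      apply Summable.congr (f := fun k : ℕ => (k : ℝ) * (M * s ^ (k - 1)))
      · rw [← summable_nat_add_iff 1]
        apply h1.congr
        intro n
        simp only [Nat.add_sub_cancel]
        push_cast
        ring
      · intro k
        show (k : ℝ) * (M * s ^ (k - 1)) = ∑' i : ℕ, (if i < k then M * s ^ (k - 1) else 0)
        rw [tsum_eq_sum (s := Finset.range k) (by
          intro i hi
          simp only [Finset.mem_range, not_lt] at hi
          simp [Nat.not_lt.mpr hi])]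
        rw [Finset.sum_congr rfl (fun i hi => if_pos (Finset.mem_range.mp hi)),
          Finset.sum_const, Finset.card_range, nsmul_eq_mul]
  have hHsum : Summable (Function.uncurry H) := by
    apply Summable.of_norm_bounded hDsum
    rintro ⟨k, i⟩
    simp only [Function.uncurry, hH]
    by_cases hik : i < k
    · rw [if_pos hik, if_pos hik, norm_mul, norm_mul, norm_pow, norm_pow]
      have h1 : ‖x‖ ^ i * ‖x₀‖ ^ (k - 1 - i) ≤ s ^ (k - 1) := by
        calc ‖x‖ ^ i * ‖x₀‖ ^ (k - 1 - i) ≤ r ^ i * r ^ (k - 1 - i) := by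
              apply mul_le_mul (pow_le_pow_left₀ (norm_nonneg x) (le_max_left _ _) i)
                (pow_le_pow_left₀ (norm_nonneg x₀) (le_max_right _ _) _)
                (pow_nonneg (norm_nonneg x₀) _) (pow_nonneg hr0 i)
          _ = r ^ (k - 1) := by rw [← pow_add]; congr 1; omega
          _ ≤ s ^ (k - 1) := pow_le_pow_left₀ hr0 hrs _
      exact mul_le_mul (ha k) h1 (by positivity) hM0
    · simp [hik]
  have hslice : ∀ i, Summable fun k => H k i := fun i =>
    Summable.congr (hHsum.prod_symm.prod_factor i) (fun k => rfl)
  -- the swap identity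
  have key : ∑' k, ∑ i ∈ Finset.range k, a k * (x ^ i * x₀ ^ (k - 1 - i))
      = ∑' i, x ^ i * ∑' m, a (i + 1 + m) * x₀ ^ m := by
    have h1 : ∀ k, ∑ i ∈ Finset.range k, a k * (x ^ i * x₀ ^ (k - 1 - i)) = ∑' i, H k i := by
      intro k
      rw [tsum_eq_sum (s := Finset.range k) (by
        intro i hi
        simp only [Finset.mem_range, not_lt] at hi
        exact if_neg (Nat.not_lt.mpr hi))]
      exact Finset.sum_congr rfl (fun i hi => (if_pos (Finset.mem_range.mp hi)).symm)
    rw [tsum_congr h1, ← Summable.tsum_comm hHsum]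
    apply tsum_congr
    intro i
    have h2 : ∑' k, H k i = ∑' m, H (m + (i + 1)) i := by
      rw [← Summable.sum_add_tsum_nat_add (i + 1) (hslice i)]
      rw [Finset.sum_eq_zero, zero_add]
      intro k hk
      exact if_neg (by simp only [Finset.mem_range] at hk; omega)
    rw [h2, ← tsum_mul_left]
    apply tsum_congr
    intro m
    have him : i < m + (i + 1) := by omega
    rw [hH]
    simp only
    rw [if_pos him]
    have : m + (i + 1) - 1 - i = m := by omega
    rw [this]
    have : m + (i + 1) = i + 1 + m := by omega
    rw [this]
    ring
  -- main computation
  have S0 : Summable fun k => a k * x ^ k := strass_summable ha hx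
  have S1 : Summable fun k => a k * x₀ ^ k := strass_summable ha hx₀
  calc ∑' k, a k * x ^ k = ∑' k, (a k * x ^ k - a k * x₀ ^ k) := by
        rw [Summable.tsum_sub S0 S1, hroot, sub_zero]
    _ = ∑' k, (∑ i ∈ Finset.range k, a k * (x ^ i * x₀ ^ (k - 1 - i))) * (x - x₀) := by
        apply tsum_congr
        intro k
        rw [← mul_sub, ← geom_sum₂_mul x x₀ k, ← Finset.mul_sum, mul_assoc]
    _ = (∑' k, ∑ i ∈ Finset.range k, a k * (x ^ i * x₀ ^ (k - 1 - i))) * (x - x₀) :=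
        tsum_mul_right
    _ = (∑' j, x ^ j * ∑' m, a (j + 1 + m) * x₀ ^ m) * (x - x₀) := by rw [key]
    _ = (∑' j, (∑' m, a (j + 1 + m) * x₀ ^ m) * x ^ j) * (x - x₀) := by
        congr 1
        exact tsum_congr fun j => mul_comm _ _


lemma strass_norm_eq_of_sub_lt {y z : K} (h : ‖y - z‖ < ‖z‖) : ‖y‖ = ‖z‖ := by
  have hy : y = z + (y - z) := by ring
  rw [hy, IsUltrametricDist.norm_add_eq_max_of_norm_ne_norm (ne_of_gt h)]
  exact max_eq_left h.le

lemma strass_main : ∀ (N : ℕ) (a : ℕ → K) (M : ℝ), 0 < M → ‖a N‖ = M → (∀ k, ‖a k‖ ≤ M) →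
    (∀ k, k < N → ‖a k‖ < M) →
    ({x : K | ‖x‖ < 1 ∧ ∑' k, a k * x ^ k = 0}).Finite ∧
      ({x : K | ‖x‖ < 1 ∧ ∑' k, a k * x ^ k = 0}).ncard ≤ N := by
  intro N
  induction N with
  | zero =>
    intro a M hM h0 hle _
    suffices h : {x : K | ‖x‖ < 1 ∧ ∑' k, a k * x ^ k = 0} = ∅ by
      simp [h]
    rw [Set.eq_empty_iff_forall_notMem]
    rintro x ⟨hx1, hx2⟩
    have hsum := strass_summable hle hx1
    have h1 := Summable.tsum_eq_zero_add hsum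
    rw [hx2, pow_zero, mul_one] at h1
    have h2 : a 0 = -∑' k, a (k + 1) * x ^ (k + 1) := by linear_combination -h1
    have h3 : ‖a 0‖ ≤ M * ‖x‖ := by
      rw [h2, norm_neg]
      apply IsUltrametricDist.norm_tsum_le_of_forall_le_of_nonneg
        (mul_nonneg hM.le (norm_nonneg x))
      intro k
      rw [norm_mul, norm_pow]
      apply mul_le_mul (hle _) _ (pow_nonneg (norm_nonneg x) _) hM.le
      calc ‖x‖ ^ (k + 1) ≤ ‖x‖ ^ 1 :=
            pow_le_pow_of_le_one (norm_nonneg x) hx1.le (by omega)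
        _ = ‖x‖ := pow_one _
    rw [h0] at h3
    nlinarith [hM, hx1]
  | succ n ih =>
    intro a M hM hN hle hlt
    rcases Set.eq_empty_or_nonempty {x : K | ‖x‖ < 1 ∧ ∑' k, a k * x ^ k = 0} with he | hne
    · simp [he]
    obtain ⟨x₀, hx₀1, hx₀2⟩ := hne
    set b : ℕ → K := fun j => ∑' m, a (j + 1 + m) * x₀ ^ m with hb
    have hble : ∀ j, ‖b j‖ ≤ M := by
      intro j
      apply IsUltrametricDist.norm_tsum_le_of_forall_le_of_nonneg hM.le
      intro m
      rw [norm_mul, norm_pow]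
      calc ‖a (j + 1 + m)‖ * ‖x₀‖ ^ m ≤ M * 1 ^ m :=
            mul_le_mul (hle _) (pow_le_pow_left₀ (norm_nonneg x₀) hx₀1.le m)
              (pow_nonneg (norm_nonneg x₀) m) hM.le
        _ = M := by rw [one_pow, mul_one]
    have htail : ∀ j, ‖∑' m, a (j + 1 + (m + 1)) * x₀ ^ (m + 1)‖ ≤ M * ‖x₀‖ := by
      intro j
      apply IsUltrametricDist.norm_tsum_le_of_forall_le_of_nonneg
        (mul_nonneg hM.le (norm_nonneg x₀))
      intro m
      rw [norm_mul, norm_pow]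
      apply mul_le_mul (hle _) _ (pow_nonneg (norm_nonneg x₀) _) hM.le
      calc ‖x₀‖ ^ (m + 1) ≤ ‖x₀‖ ^ 1 :=
            pow_le_pow_of_le_one (norm_nonneg x₀) hx₀1.le (by omega)
        _ = ‖x₀‖ := pow_one _
    have hbN : ‖b n‖ = M := by
      have hsum : Summable fun m => a (n + 1 + m) * x₀ ^ m := strass_shift_summable hle hx₀1 n
      have h1 := Summable.tsum_eq_zero_add hsum
      rw [pow_zero, mul_one] at h1
      rw [hb]
      simp only
      rw [h1, add_comm]
      have hlt' : ‖∑' m, a (n + 1 + (m + 1)) * x₀ ^ (m + 1)‖ < ‖a (n + 1 + 0)‖ := by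
        have := htail n
        have : M * ‖x₀‖ < M := by nlinarith [hM, hx₀1, norm_nonneg x₀]
        calc ‖∑' m, a (n + 1 + (m + 1)) * x₀ ^ (m + 1)‖ ≤ M * ‖x₀‖ := htail n
          _ < M := this
          _ = ‖a (n + 1 + 0)‖ := by rw [Nat.add_zero]; exact hN.symm
      rw [IsUltrametricDist.norm_add_eq_max_of_norm_ne_norm (ne_of_lt hlt'),
        max_eq_right hlt'.le, Nat.add_zero, hN]
    have hblt : ∀ j, j < n → ‖b j‖ < M := by
      intro j hj
      set C : ℝ := ((Finset.range (n + 1)).image fun k => ‖a k‖).max'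
        ⟨‖a 0‖, Finset.mem_image.mpr ⟨0, Finset.mem_range.mpr (by omega), rfl⟩⟩ with hC
      have hCmem := ((Finset.range (n + 1)).image fun k => ‖a k‖).max'_mem
        ⟨‖a 0‖, Finset.mem_image.mpr ⟨0, Finset.mem_range.mpr (by omega), rfl⟩⟩
      obtain ⟨k₀, hk₀, hk₀'⟩ := Finset.mem_image.mp hCmem
      have hClt : C < M := by
        rw [show C = ‖a k₀‖ from hk₀'.symm]
        exact hlt k₀ (Finset.mem_range.mp hk₀)
      have hCge : ∀ k, k ≤ n → ‖a k‖ ≤ C := by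
        intro k hk
        apply Finset.le_max'
        exact Finset.mem_image.mpr ⟨k, Finset.mem_range.mpr (by omega), rfl⟩
      have hbound : ‖b j‖ ≤ max C (M * ‖x₀‖) := by
        apply IsUltrametricDist.norm_tsum_le_of_forall_le_of_nonneg
          (le_trans (norm_nonneg (a 0)) (le_trans (hCge 0 (by omega)) (le_max_left _ _)))
        intro m
        rw [norm_mul, norm_pow]
        rcases le_or_gt (j + 1 + m) n with hc | hc
        · calc ‖a (j + 1 + m)‖ * ‖x₀‖ ^ m ≤ C * 1 :=
                mul_le_mul (hCge _ hc)
                  (pow_le_one₀ (norm_nonneg x₀) hx₀1.le)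
                  (pow_nonneg (norm_nonneg x₀) m) (le_trans (norm_nonneg (a 0)) (hCge 0 (by omega)))
            _ = C := mul_one C
            _ ≤ max C (M * ‖x₀‖) := le_max_left _ _
        · have hm1 : 1 ≤ m := by omega
          calc ‖a (j + 1 + m)‖ * ‖x₀‖ ^ m ≤ M * ‖x₀‖ := by
                apply mul_le_mul (hle _) _ (pow_nonneg (norm_nonneg x₀) _) hM.le
                calc ‖x₀‖ ^ m ≤ ‖x₀‖ ^ 1 :=
                      pow_le_pow_of_le_one (norm_nonneg x₀) hx₀1.le hm1
                  _ = ‖x₀‖ := pow_one _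
            _ ≤ max C (M * ‖x₀‖) := le_max_right _ _
      have : max C (M * ‖x₀‖) < M :=
        max_lt hClt (by nlinarith [hM, hx₀1, norm_nonneg x₀])
      linarith
    obtain ⟨hfin, hcard⟩ := ih b M hM hbN hble hblt
    have hsub : {x : K | ‖x‖ < 1 ∧ ∑' k, a k * x ^ k = 0} ⊆
        insert x₀ {x : K | ‖x‖ < 1 ∧ ∑' k, b k * x ^ k = 0} := by
      rintro x ⟨hx1, hx2⟩
      have hfac := strass_factor hle hx₀1 hx₀2 hx1
      rw [hx2] at hfac
      rcases mul_eq_zero.mp hfac.symm with h | h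
      · right
        exact ⟨hx1, h⟩
      · left
        have : x = x₀ := by linear_combination h
        exact this
    refine ⟨((hfin.insert x₀).subset hsub), ?_⟩
    calc ({x : K | ‖x‖ < 1 ∧ ∑' k, a k * x ^ k = 0}).ncard
        ≤ (insert x₀ {x : K | ‖x‖ < 1 ∧ ∑' k, b k * x ^ k = 0}).ncard :=
          Set.ncard_le_ncard hsub (hfin.insert x₀)
      _ ≤ ({x : K | ‖x‖ < 1 ∧ ∑' k, b k * x ^ k = 0}).ncard + 1 := Set.ncard_insert_le _ _
      _ ≤ n + 1 := by omega

end StrassmannAux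

/-- Weierstrass-type finiteness: a nonzero power series `f ∈ O[[T]]` over the ring of integers
`O` of a finite extension `E` of `ℚ_p` has a uniformly bounded number of zeros in the maximal
ideal of the ring of integers of any finite extension `E'` of `E`. -/
theorem statement13 (p : ℕ) [Fact p.Prime]
    (E : Type) [NormedField E] [IsUltrametricDist E] [CompleteSpace E]
    [NormedAlgebra ℚ_[p] E] [FiniteDimensional ℚ_[p] E]
    (hE : ∀ r : ℚ_[p], ‖algebraMap ℚ_[p] E r‖ = ‖r‖)
    (f : PowerSeries (integerSubring E)) (hf : f ≠ 0) :
    ∃ N : ℕ, ∀ (E' : Type) [NormedField E'] [IsUltrametricDist E'] [CompleteSpace E']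
      [NormedAlgebra E E'] [FiniteDimensional E E'],
      (∀ x : E, ‖algebraMap E E' x‖ = ‖x‖) →
      ({x : E' | ‖x‖ < 1 ∧
          ∑' k : ℕ, algebraMap E E' (((PowerSeries.coeff (R := ↥(integerSubring E)) k f) : ↥(integerSubring E)) : E) * x ^ k = 0}.Finite ∧
        {x : E' | ‖x‖ < 1 ∧
          ∑' k : ℕ, algebraMap E E' (((PowerSeries.coeff (R := ↥(integerSubring E)) k f) : ↥(integerSubring E)) : E) * x ^ k = 0}.ncard ≤ N) := by
  have hproper : ProperSpace E := FiniteDimensional.proper ℚ_[p] E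
  set c : ℕ → E := fun k => ((PowerSeries.coeff (R := integerSubring E) k f : (integerSubring E)) : E)
    with hc
  have hle1 : ∀ k, ‖c k‖ ≤ 1 := fun k => (PowerSeries.coeff (R := integerSubring E) k f).2
  have hex0 : ∃ k, c k ≠ 0 := by
    by_contra h
    push_neg at h
    apply hf
    ext k
    have := h k
    rw [hc] at this
    simpa using this
  obtain ⟨k₀, hk₀⟩ := hex0
  -- sup of norms is attained
  set S : Set ℝ := Set.range fun k => ‖c k‖ with hS
  have hSne : S.Nonempty := ⟨‖c 0‖, ⟨0, rfl⟩⟩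
  have hSbdd : BddAbove S := by
    refine ⟨1, ?_⟩
    rintro - ⟨k, rfl⟩
    exact hle1 k
  set M : ℝ := sSup S with hM
  have hMk : ∀ k, ‖c k‖ ≤ M := fun k => le_csSup hSbdd ⟨k, rfl⟩
  have hMpos : 0 < M := lt_of_lt_of_le (norm_pos_iff.mpr hk₀) (hMk k₀)
  have hattain : ∃ k, ‖c k‖ = M := by
    obtain ⟨u, -, hu2, hu3⟩ := exists_seq_tendsto_sSup hSne hSbdd
    choose v hv using fun n => hu3 n
    have hvtend : Filter.Tendsto (fun n => ‖c (v n)‖) Filter.atTop (nhds M) := by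
      rw [hM]
      exact Filter.Tendsto.congr (fun n => (hv n).symm) hu2
    have hcompact : IsCompact (Metric.closedBall (0 : E) 1) := isCompact_closedBall 0 1
    have hmem : ∀ n, c (v n) ∈ Metric.closedBall (0 : E) 1 := by
      intro n
      rw [Metric.mem_closedBall, dist_zero_right]
      exact hle1 _
    obtain ⟨y, -, φ, hφ, hyt⟩ := hcompact.tendsto_subseq hmem
    have hny : Filter.Tendsto (fun n => ‖c (v (φ n))‖) Filter.atTop (nhds ‖y‖) :=
      (continuous_norm.continuousAt.tendsto.comp hyt)
    have hny' : Filter.Tendsto (fun n => ‖c (v (φ n))‖) Filter.atTop (nhds M) :=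
      hvtend.comp hφ.tendsto_atTop
    have hyM : ‖y‖ = M := tendsto_nhds_unique hny hny'
    have hclose : ∀ᶠ n in Filter.atTop, ‖c (v (φ n)) - y‖ < ‖y‖ := by
      have : Filter.Tendsto (fun n => ‖c (v (φ n)) - y‖) Filter.atTop (nhds 0) :=
        tendsto_iff_norm_sub_tendsto_zero.mp hyt
      exact this.eventually_lt_const (by rw [hyM]; exact hMpos)
    obtain ⟨n, hn⟩ := hclose.exists
    exact ⟨v (φ n), (strass_norm_eq_of_sub_lt hn).trans hyM⟩
  set N : ℕ := Nat.find hattain with hN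
  have hNeq : ‖c N‖ = M := Nat.find_spec hattain
  have hNlt : ∀ k, k < N → ‖c k‖ < M := by
    intro k hk
    exact lt_of_le_of_ne (hMk k) (Nat.find_min hattain hk)
  refine ⟨N, ?_⟩
  intro E' _ _ _ _ _ hE'
  exact strass_main N (fun k => algebraMap E E' (c k)) M hMpos
    (by rw [hE', hNeq]) (fun k => by rw [hE']; exact hMk k)
    (fun k hk => by rw [hE']; exact hNlt k hk)
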